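/- There exist 3×3 row-stochastic matrices P and Q that commute (P * Q = Q * P) but fail the cardinality condition: there exist indices i, k with |{j : q_{kj} p_{ji} ≠ 0}| ≠ |{j : p_{kj} q_{ji} ≠ 0}|. Concretely, P with all entries 1/3 and Q = [[1/2,0,1/2],[1/4,1/2,1/4],[1/4,1/2,1/4]] witness this. -/

import Mathlib

/-- A row-stochastic matrix: nonnegative entries, each row sums to 1. -/
def IsRowStochastic {ι : Type*} [Fintype ι] (p : Matrix ι ι ℝ) : Prop :=
  (∀ i j, 0 ≤ p i j) ∧ ∀ i, ∑ j, p i j = 1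

/-- There exist commuting 3×3 row-stochastic matrices which fail the cardinality criterion for
strong commutation; concretely, `P` with all entries `1/3` and
`Q = [[1/2,0,1/2],[1/4,1/2,1/4],[1/4,1/2,1/4]]` witness this. -/
theorem exists_commuting_stochastic_not_strongly_commuting :
    ∃ P Q : Matrix (Fin 3) (Fin 3) ℝ,
      P = Matrix.of (fun _ _ => (1 : ℝ) / 3) ∧
      Q = Matrix.of ![![1/2, 0, 1/2], ![1/4, 1/2, 1/4], ![1/4, 1/2, 1/4]] ∧
      IsRowStochastic P ∧ IsRowStochastic Q ∧ P * Q = Q * P ∧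
      ∃ i k : Fin 3,
        ({j | Q k j * P j i ≠ 0} : Set (Fin 3)).ncard ≠
        ({j | P k j * Q j i ≠ 0} : Set (Fin 3)).ncard := by
  refine ⟨_, _, rfl, rfl, ⟨?_, ?_⟩, ⟨?_, ?_⟩, ?_, 0, 0, ?_⟩
  · intro i j; norm_num
  · intro i; rw [Fin.sum_univ_three]; norm_num
  · intro i j
    fin_cases i <;> fin_cases j <;>
      norm_num [Matrix.of_apply, Matrix.vecHead, Matrix.vecTail]
  · intro i
    fin_cases i <;>
      norm_num [Fin.sum_univ_three, Matrix.of_apply, Matrix.vecHead, Matrix.vecTail,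
        Matrix.cons_val_two]
  · ext i j
    fin_cases i <;> fin_cases j <;>
      norm_num [Matrix.mul_apply, Fin.sum_univ_three, Matrix.of_apply,
        Matrix.vecHead, Matrix.vecTail, Matrix.cons_val_two]
  · have key : ∀ A B : Matrix (Fin 3) (Fin 3) ℝ,
        A = Matrix.of (fun _ _ => (1 : ℝ) / 3) →
        B = Matrix.of ![![1/2, 0, 1/2], ![1/4, 1/2, 1/4], ![1/4, 1/2, 1/4]] →
        ({j | B 0 j * A j 0 ≠ 0} : Set (Fin 3)).ncard ≠
        ({j | A 0 j * B j 0 ≠ 0} : Set (Fin 3)).ncard := by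
      intro A B hA hB
      have hL : ({j | B 0 j * A j 0 ≠ 0} : Set (Fin 3)) = {0, 2} := by
        ext j
        fin_cases j <;>
          simp [hA, hB, Matrix.of_apply, Matrix.vecHead, Matrix.vecTail, Set.mem_insert_iff]
      have hR : ({j | A 0 j * B j 0 ≠ 0} : Set (Fin 3)) = {0, 1, 2} := by
        ext j
        fin_cases j <;>
          simp [hA, hB, Matrix.of_apply, Matrix.vecHead, Matrix.vecTail, Set.mem_insert_iff]
      rw [hL, hR, Set.ncard_pair (by decide),
        show ({0, 1, 2} : Set (Fin 3)) = Set.univ by ext j; fin_cases j <;> simp]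
      simp [Set.ncard_univ]
    exact key _ _ rfl rfl
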